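/- Let (S_i)_{i≥1} be a sequence in a commutative ℚ-algebra and define (a_n)_{n≥0} by a_0 = 1 and the recurrence n·a_n = Σ_{i=1}^{n} S_i · a_{n-i} for n ≥ 1. Then for every n ≥ 1, a_n = Σ over all compositions (m_1,…,m_r) of n of Π_{s=1}^{r} S_{m_s}/(m_1+⋯+m_s). -/

import Mathlib

open Finset

section Aux

variable {A : Type*} [CommRing A] [Algebra ℚ A]

/-- The sum over compositions appearing in the statement. -/
noncomputable def compSum (S : ℕ → A) (m : ℕ) : A :=
  ∑ c : Composition m, ∏ s : Fin c.length, ((c.sizeUpTo (s + 1) : ℚ)⁻¹) • S (c.blocksFun s)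

instance : Unique (Composition 0) := by
  refine ⟨⟨⟨[], by simp, rfl⟩⟩, fun c => ?_⟩
  have hb : c.blocks = [] := by
    cases hb : c.blocks with
    | nil => rfl
    | cons a l =>
      have hs := c.blocks_sum
      have hp : 0 < a := c.blocks_pos (by rw [hb]; exact List.mem_cons_self)
      rw [hb] at hs
      simp at hs
      omega
  exact Composition.ext hb

lemma compSum_zero (S : ℕ → A) : compSum S 0 = 1 := by
  rw [compSum, Fintype.sum_unique]
  exact Finset.prod_eq_one (fun x _ => (Nat.not_lt_zero _ x.2).elim)

lemma blocks_ne_nil {n : ℕ} (hn : 1 ≤ n) (c : Composition n) : c.blocks ≠ [] := by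
  intro h
  have := c.blocks_sum
  rw [h] at this
  simp at this
  omega

/-- Extend a composition of `n - i` by a final block of size `i`. -/
def extC (n i : ℕ) (hi1 : 1 ≤ i) (hin : i ≤ n) (c : Composition (n - i)) : Composition n where
  blocks := c.blocks ++ [i]
  blocks_pos := by
    intro j hj
    rcases List.mem_append.1 hj with h | h
    · exact c.blocks_pos h
    · simp at h; omega
  blocks_sum := by
    have := c.blocks_sum
    simp [this]
    omega

/-- Split off the last block of a composition. -/
def splitC (n : ℕ) (hn : 1 ≤ n) (c : Composition n) : Σ i : ℕ, Composition (n - i) :=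
  ⟨c.blocks.getLast (blocks_ne_nil hn c),
   ⟨c.blocks.dropLast,
    fun hj => c.blocks_pos (List.mem_of_mem_dropLast hj),
    by
      have h2 : (c.blocks.dropLast ++ [c.blocks.getLast (blocks_ne_nil hn c)]).sum = n := by
        rw [List.dropLast_append_getLast, c.blocks_sum]
      rw [List.sum_append] at h2
      simp at h2
      omega⟩⟩

lemma sigma_mk_eq {n i x : ℕ} (h : x = i) (d : Composition (n - x)) (c : Composition (n - i))
    (hb : d.blocks = c.blocks) : (⟨x, d⟩ : Σ j, Composition (n - j)) = ⟨i, c⟩ := by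
  subst h
  exact congrArg _ (Composition.ext hb)

lemma extC_length (n i : ℕ) (hi1 : 1 ≤ i) (hin : i ≤ n) (c : Composition (n - i)) :
    (extC n i hi1 hin c).length = c.length + 1 := by
  simp [extC, Composition.length]

lemma extC_prod (S : ℕ → A) (n i : ℕ) (hi1 : 1 ≤ i) (hin : i ≤ n) (c : Composition (n - i)) :
    (∏ s : Fin (extC n i hi1 hin c).length,
        (((extC n i hi1 hin c).sizeUpTo (s + 1) : ℚ)⁻¹) • S ((extC n i hi1 hin c).blocksFun s)) =
      (∏ s : Fin c.length, ((c.sizeUpTo (s + 1) : ℚ)⁻¹) • S (c.blocksFun s)) *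
        ((n : ℚ)⁻¹ • S i) := by
  set d := extC n i hi1 hin c with hd
  have hlen : c.length + 1 = d.length := (extC_length n i hi1 hin c).symm
  rw [← Fin.prod_congr' _ hlen, Fin.prod_univ_castSucc]
  congr 1
  · apply Finset.prod_congr rfl
    intro s _
    have hup : d.sizeUpTo ((s : ℕ) + 1) = c.sizeUpTo ((s : ℕ) + 1) := by
      simp only [Composition.sizeUpTo, hd, extC]
      rw [List.take_append_of_le_length]
      exact Nat.succ_le_of_lt s.2
    have hbf : d.blocksFun (Fin.cast hlen s.castSucc) = c.blocksFun s := by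
      show d.blocks[((Fin.cast hlen s.castSucc : Fin d.length) : ℕ)] = c.blocks[(s : ℕ)]
      simp only [hd, extC, Fin.coe_cast, Fin.coe_castSucc]
      exact List.getElem_append_left _
    simp only [Fin.coe_cast, Fin.coe_castSucc] at hup ⊢
    rw [hup, hbf]
  · have h1 : d.sizeUpTo (c.length + 1) = n := by
      rw [hlen, Composition.sizeUpTo_length]
    have h2 : d.blocksFun (Fin.cast hlen (Fin.last c.length)) = i := by
      show d.blocks[((Fin.cast hlen (Fin.last c.length) : Fin d.length) : ℕ)] = i
      simp only [hd, extC, Fin.coe_cast, Fin.val_last]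
      exact List.getElem_concat_length rfl _
    simp only [Fin.coe_cast, Fin.val_last]
    rw [h1, h2]

lemma compSum_rec (S : ℕ → A) (n : ℕ) (hn : 1 ≤ n) :
    (n : A) * compSum S n = ∑ i ∈ Finset.Icc 1 n, S i * compSum S (n - i) := by
  have hn0 : (n : ℚ) ≠ 0 := Nat.cast_ne_zero.mpr (by omega)
  have hcast : (n : A) = algebraMap ℚ A (n : ℚ) := by push_cast; rfl
  rw [hcast, ← Algebra.smul_def, compSum, Finset.smul_sum]
  have hrhs : ∑ i ∈ Finset.Icc 1 n, S i * compSum S (n - i)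
      = ∑ p ∈ (Finset.Icc 1 n).sigma (fun i => (Finset.univ : Finset (Composition (n - i)))),
          S p.1 * ∏ s : Fin p.2.length, ((p.2.sizeUpTo (s + 1) : ℚ)⁻¹) • S (p.2.blocksFun s) := by
    rw [Finset.sum_sigma]
    apply Finset.sum_congr rfl
    intro i _
    rw [compSum, Finset.mul_sum]
  rw [hrhs]
  refine (Finset.sum_bij'
    (i := fun p (hp : p ∈ (Finset.Icc 1 n).sigma fun i => (Finset.univ : Finset (Composition (n-i)))) =>
      extC n p.1
        (by rw [Finset.mem_sigma, Finset.mem_Icc] at hp; exact hp.1.1)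
        (by rw [Finset.mem_sigma, Finset.mem_Icc] at hp; exact hp.1.2) p.2)
    (j := fun c _ => splitC n hn c)
    ?_ ?_ ?_ ?_ ?_).symm
  · intro p hp; exact Finset.mem_univ _
  · intro c _
    rw [Finset.mem_sigma, Finset.mem_Icc]
    have hne : c.blocks ≠ [] := blocks_ne_nil hn c
    refine ⟨⟨c.blocks_pos (List.getLast_mem hne), ?_⟩, Finset.mem_univ _⟩
    have h3 := List.le_sum_of_mem (List.getLast_mem hne)
    rw [c.blocks_sum] at h3
    exact h3
  · -- left inverse : split (ext p) = p
    rintro ⟨i, c⟩ hp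
    rw [Finset.mem_sigma, Finset.mem_Icc] at hp
    apply sigma_mk_eq
    · simp only [splitC, extC]
      exact List.getLast_concat
    · simp only [splitC, extC]
      exact List.dropLast_concat
  · -- right inverse : ext (split c) = c
    intro c _
    apply Composition.ext
    simp only [extC, splitC]
    exact List.dropLast_append_getLast _
  · -- values
    rintro ⟨i, c⟩ hp
    rw [Finset.mem_sigma, Finset.mem_Icc] at hp
    rw [extC_prod S n i hp.1.1 hp.1.2 c, mul_smul_comm, smul_smul,
      mul_inv_cancel₀ hn0, one_smul, mul_comm]

lemma compSum_eq (S : ℕ → A) (a : ℕ → A) (ha0 : a 0 = 1)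
    (harec : ∀ n : ℕ, 1 ≤ n → (n : A) * a n = ∑ i ∈ Finset.Icc 1 n, S i * a (n - i)) :
    ∀ n : ℕ, a n = compSum S n := by
  intro n
  induction n using Nat.strong_induction_on with
  | _ n ih =>
    rcases Nat.eq_zero_or_pos n with rfl | hn
    · rw [ha0, compSum_zero]
    · have h : (n : A) * a n = (n : A) * compSum S n := by
        rw [harec n hn, compSum_rec S n hn]
        apply Finset.sum_congr rfl
        intro i hi
        rw [Finset.mem_Icc] at hi
        rw [ih (n - i) (by omega)]
      have hn0 : (n : ℚ) ≠ 0 := Nat.cast_ne_zero.mpr (by omega)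
      have hsmul : ∀ x : A, (n : A) * x = (n : ℚ) • x := by
        intro x
        rw [Algebra.smul_def]
        push_cast
        rfl
      rw [hsmul, hsmul] at h
      calc a n = (n : ℚ)⁻¹ • ((n : ℚ) • a n) := by
              rw [smul_smul, inv_mul_cancel₀ hn0, one_smul]
        _ = (n : ℚ)⁻¹ • ((n : ℚ) • compSum S n) := by rw [h]
        _ = compSum S n := by rw [smul_smul, inv_mul_cancel₀ hn0, one_smul]

end Aux

/-- If `a 0 = 1` and `n • a n = ∑_{i=1}^n S i * a (n-i)`, then `a n` is the sum over
compositions of `n` of the products `∏ S_{m_s} / (m_1 + ⋯ + m_s)`. -/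
theorem coeff_eq_sum_over_compositions {A : Type*} [CommRing A] [Algebra ℚ A]
    (S : ℕ → A) (a : ℕ → A)
    (ha0 : a 0 = 1)
    (harec : ∀ n : ℕ, 1 ≤ n → (n : A) * a n = ∑ i ∈ Finset.Icc 1 n, S i * a (n - i)) :
    ∀ n : ℕ, 1 ≤ n →
      a n = ∑ c : Composition n, ∏ s : Fin c.length,
        ((c.sizeUpTo (s + 1) : ℚ)⁻¹) • S (c.blocksFun s) := by
  intro n _
  exact compSum_eq S a ha0 harec n
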